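/- Let (A,d) be a nonempty compact metric space. Then the function t ↦ (|tA|_+)^{1/t} is nonincreasing on (0,∞): for all 0 < s ≤ t, (|tA|_+)^{1/t} ≤ (|sA|_+)^{1/s}. Consequently, t ↦ log(2·|tA|_+)/t is strictly decreasing on (0,∞). -/

import Mathlib

open MeasureTheory Filter
open scoped ENNReal Topology

noncomputable section

/-- The maximum diversity `|tA|₊` of a compact metric space `A`: the supremum over Borel
probability measures `μ` on `A` of `(∫∫ e^{-t d(a,b)} dμ dμ)⁻¹`. -/
def maxDiv (A : Type*) [MetricSpace A] [MeasurableSpace A] (t : ℝ) : ℝ≥0∞ :=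
  ⨆ μ : ProbabilityMeasure A,
    (∫⁻ a, ∫⁻ b, ENNReal.ofReal (Real.exp (-t * dist a b))
      ∂(μ : Measure A) ∂(μ : Measure A))⁻¹

/-- The covering number `N(A,ε)`: the smallest `m` such that `A` is covered by `m` closed
balls of radius `ε` centered at points of `A`. -/
def coveringNumber (A : Type*) [MetricSpace A] (ε : ℝ) : ℕ :=
  sInf {m : ℕ | ∃ s : Finset A, s.card = m ∧ ∀ a : A, ∃ c ∈ s, dist a c ≤ ε}

/-- The packing number `M(A,ε)`: the largest `m` such that there are `m` points of `A`
whose closed balls of radius `ε` are pairwise disjoint. -/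
def packingNumber (A : Type*) [MetricSpace A] (ε : ℝ) : ℕ :=
  sSup {m : ℕ | ∃ x : Fin m → A, Pairwise fun j k =>
    Disjoint (Metric.closedBall (x j) ε) (Metric.closedBall (x k) ε)}

/-- The upper Minkowski dimension `limsup_{ε→0⁺} log N(A,ε)/log(1/ε)`, in `[0,∞]`. -/
def upperMinkowski (A : Type*) [MetricSpace A] : ℝ≥0∞ :=
  limsup (fun ε : ℝ =>
    ENNReal.ofReal (Real.log (coveringNumber A ε) / Real.log (1 / ε))) (𝓝[>] 0)

/-- The lower Minkowski dimension `liminf_{ε→0⁺} log N(A,ε)/log(1/ε)`, in `[0,∞]`. -/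
def lowerMinkowski (A : Type*) [MetricSpace A] : ℝ≥0∞ :=
  liminf (fun ε : ℝ =>
    ENNReal.ofReal (Real.log (coveringNumber A ε) / Real.log (1 / ε))) (𝓝[>] 0)

private lemma jensen_rpow {α : Type*} [MeasurableSpace α] (ν : Measure α)
    [IsProbabilityMeasure ν] {g : α → ℝ≥0∞} (hg : AEMeasurable g ν) {p : ℝ} (hp : 1 ≤ p) :
    (∫⁻ a, g a ∂ν) ^ p ≤ ∫⁻ a, g a ^ p ∂ν := by
  rcases eq_or_lt_of_le hp with h1 | h1
  · simp [← h1]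
  have hpq := Real.HolderConjugate.conjExponent h1
  have h := ENNReal.lintegral_mul_le_Lp_mul_Lq ν hpq hg
    (aemeasurable_const (b := (1 : ℝ≥0∞)))
  simp only [Pi.mul_apply, mul_one, ENNReal.one_rpow, lintegral_one, measure_univ,
    ENNReal.one_rpow] at h
  have hp0 : (0:ℝ) < p := lt_trans one_pos h1
  calc (∫⁻ a, g a ∂ν) ^ p ≤ ((∫⁻ a, g a ^ p ∂ν) ^ (1 / p)) ^ p :=
        ENNReal.rpow_le_rpow h hp0.le
    _ = ∫⁻ a, g a ^ p ∂ν := by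
        rw [← ENNReal.rpow_mul, one_div, inv_mul_cancel₀ hp0.ne', ENNReal.rpow_one]

private lemma maxDiv_rpow_anti (A : Type*) [MetricSpace A] [MeasurableSpace A] [BorelSpace A]
    [CompactSpace A] {s t : ℝ} (hs : 0 < s) (hst : s ≤ t) :
    (maxDiv A t) ^ (1 / t) ≤ (maxDiv A s) ^ (1 / s) := by
  have ht : 0 < t := lt_of_lt_of_le hs hst
  have hmeas : ∀ r : ℝ, Measurable fun p : A × A => ENNReal.ofReal (Real.exp (-r * dist p.1 p.2)) :=
    fun r => (ENNReal.continuous_ofReal.comp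
      (Real.continuous_exp.comp (continuous_const.mul continuous_dist))).measurable
  have key : maxDiv A t ≤ (maxDiv A s) ^ (t / s) := by
    refine iSup_le fun μ => ?_
    have hiter : ∀ r : ℝ,
        (∫⁻ a, ∫⁻ b, ENNReal.ofReal (Real.exp (-r * dist a b)) ∂(μ : Measure A) ∂(μ : Measure A))
          = ∫⁻ p, ENNReal.ofReal (Real.exp (-r * dist p.1 p.2)) ∂((μ : Measure A).prod μ) :=
      fun r => (MeasureTheory.lintegral_prod _ (hmeas r).aemeasurable).symm
    have hpt : ∀ p : A × A, ENNReal.ofReal (Real.exp (-t * dist p.1 p.2))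
        = ENNReal.ofReal (Real.exp (-s * dist p.1 p.2)) ^ (t / s) := by
      intro p
      rw [ENNReal.ofReal_rpow_of_pos (Real.exp_pos _), ← Real.exp_mul]
      congr 2
      field_simp
    have hts1 : (1:ℝ) ≤ t / s := (one_le_div hs).2 hst
    have hZ : (∫⁻ a, ∫⁻ b, ENNReal.ofReal (Real.exp (-s * dist a b))
          ∂(μ : Measure A) ∂(μ : Measure A)) ^ (t / s)
        ≤ ∫⁻ a, ∫⁻ b, ENNReal.ofReal (Real.exp (-t * dist a b))
          ∂(μ : Measure A) ∂(μ : Measure A) := by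
      rw [hiter s, hiter t]
      calc (∫⁻ p, ENNReal.ofReal (Real.exp (-s * dist p.1 p.2)) ∂((μ : Measure A).prod μ)) ^ (t/s)
          ≤ ∫⁻ p, ENNReal.ofReal (Real.exp (-s * dist p.1 p.2)) ^ (t/s)
              ∂((μ : Measure A).prod μ) :=
            jensen_rpow _ (hmeas s).aemeasurable hts1
        _ = _ := by
            refine lintegral_congr fun p => ?_
            rw [← hpt p]
    calc (∫⁻ a, ∫⁻ b, ENNReal.ofReal (Real.exp (-t * dist a b))
            ∂(μ : Measure A) ∂(μ : Measure A))⁻¹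
        ≤ ((∫⁻ a, ∫⁻ b, ENNReal.ofReal (Real.exp (-s * dist a b))
            ∂(μ : Measure A) ∂(μ : Measure A)) ^ (t / s))⁻¹ :=
          ENNReal.inv_le_inv.2 hZ
      _ = ((∫⁻ a, ∫⁻ b, ENNReal.ofReal (Real.exp (-s * dist a b))
            ∂(μ : Measure A) ∂(μ : Measure A))⁻¹) ^ (t / s) := (ENNReal.inv_rpow _ _).symm
      _ ≤ (maxDiv A s) ^ (t / s) :=
          ENNReal.rpow_le_rpow (le_iSup (fun ν : ProbabilityMeasure A =>
            (∫⁻ a, ∫⁻ b, ENNReal.ofReal (Real.exp (-s * dist a b))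
              ∂(ν : Measure A) ∂(ν : Measure A))⁻¹) μ) (by positivity)
  calc (maxDiv A t) ^ (1 / t) ≤ ((maxDiv A s) ^ (t / s)) ^ (1 / t) :=
        ENNReal.rpow_le_rpow key (by positivity)
    _ = (maxDiv A s) ^ (1 / s) := by
        rw [← ENNReal.rpow_mul]
        congr 1
        field_simp

private lemma one_le_maxDiv (A : Type*) [MetricSpace A] [MeasurableSpace A] [BorelSpace A]
    [Nonempty A] {t : ℝ} (ht : 0 < t) : 1 ≤ maxDiv A t := by
  let μ : ProbabilityMeasure A := ⟨Measure.dirac (Classical.arbitrary A), inferInstance⟩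
  refine le_trans ?_ (le_iSup _ μ)
  rw [ENNReal.one_le_inv]
  calc (∫⁻ a, ∫⁻ b, ENNReal.ofReal (Real.exp (-t * dist a b)) ∂(μ : Measure A) ∂(μ : Measure A))
      ≤ ∫⁻ _, ∫⁻ _, 1 ∂(μ : Measure A) ∂(μ : Measure A) := by
        refine lintegral_mono fun a => lintegral_mono fun b => ?_
        rw [← ENNReal.ofReal_one]
        have hd : (0:ℝ) ≤ t * dist a b := mul_nonneg ht.le dist_nonneg
        exact ENNReal.ofReal_le_ofReal (Real.exp_le_one_iff.2 (by linarith))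
    _ = 1 := by simp

private lemma maxDiv_ne_top (A : Type*) [MetricSpace A] [MeasurableSpace A] [BorelSpace A]
    [CompactSpace A] {t : ℝ} (ht : 0 < t) : maxDiv A t ≠ ⊤ := by
  obtain ⟨C, hC⟩ := Metric.isBounded_iff.1 (isCompact_univ (X := A)).isBounded
  have hb : maxDiv A t ≤ (ENNReal.ofReal (Real.exp (-t * C)))⁻¹ := by
    refine iSup_le fun μ => ?_
    rw [ENNReal.inv_le_inv]
    calc ENNReal.ofReal (Real.exp (-t * C))
        = ∫⁻ _, ∫⁻ _, ENNReal.ofReal (Real.exp (-t * C))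
            ∂(μ : Measure A) ∂(μ : Measure A) := by simp
      _ ≤ _ := by
          refine lintegral_mono fun a => lintegral_mono fun b => ?_
          refine ENNReal.ofReal_le_ofReal (Real.exp_le_exp.2 ?_)
          have := hC (Set.mem_univ a) (Set.mem_univ b)
          nlinarith
  refine ne_top_of_le_ne_top ?_ hb
  simp [Real.exp_pos]

theorem stmt15 (A : Type*) [MetricSpace A] [MeasurableSpace A] [BorelSpace A]
    [CompactSpace A] [Nonempty A] :
    (∀ s t : ℝ, 0 < s → s ≤ t → (maxDiv A t) ^ (1 / t) ≤ (maxDiv A s) ^ (1 / s)) ∧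
    (∀ s t : ℝ, 0 < s → s < t →
      Real.log (2 * (maxDiv A t).toReal) / t < Real.log (2 * (maxDiv A s).toReal) / s) := by
  constructor
  · intro s t hs hst
    exact maxDiv_rpow_anti A hs hst
  · intro s t hs hst
    have ht : 0 < t := hs.trans hst
    have hat := maxDiv_ne_top A ht
    have hbt := maxDiv_ne_top A hs
    have ha1 : (1:ℝ) ≤ (maxDiv A t).toReal := by
      have := ENNReal.toReal_mono hat (one_le_maxDiv A ht)
      simpa using this
    have hb1 : (1:ℝ) ≤ (maxDiv A s).toReal := by
      have := ENNReal.toReal_mono hbt (one_le_maxDiv A hs)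
      simpa using this
    have h := maxDiv_rpow_anti A hs hst.le
    have h' : (maxDiv A t).toReal ^ (1/t) ≤ (maxDiv A s).toReal ^ (1/s) := by
      rw [ENNReal.toReal_rpow, ENNReal.toReal_rpow]
      exact ENNReal.toReal_mono (ENNReal.rpow_ne_top_of_nonneg (by positivity) hbt) h
    have hlog : (1/t) * Real.log (maxDiv A t).toReal ≤ (1/s) * Real.log (maxDiv A s).toReal := by
      rw [← Real.log_rpow (by linarith), ← Real.log_rpow (by linarith)]
      exact Real.log_le_log (by positivity) h'
    rw [Real.log_mul two_ne_zero (by linarith), Real.log_mul two_ne_zero (by linarith)]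
    have h2 : Real.log 2 / t < Real.log 2 / s :=
      div_lt_div_of_pos_left (Real.log_pos one_lt_two) hs hst
    have h3 : Real.log (maxDiv A t).toReal / t ≤ Real.log (maxDiv A s).toReal / s := by
      rw [div_eq_inv_mul, div_eq_inv_mul, ← one_div, ← one_div]
      exact hlog
    calc (Real.log 2 + Real.log (maxDiv A t).toReal)/t
        = Real.log 2/t + Real.log (maxDiv A t).toReal/t := add_div _ _ _
      _ < Real.log 2/s + Real.log (maxDiv A s).toReal/s := add_lt_add_of_lt_of_le h2 h3
      _ = _ := (add_div _ _ _).symm
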